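/- Let ω : V × V → ℂ be ℝ-bilinear, alternating, and of type (1,1). Define ω_ℂ((a, b), (c, d)) = ω(a, c) − ω(b, d) + i·(ω(a, d) + ω(b, c)) for a, b, c, d ∈ V (the complex-bilinear extension of ω to the complexification, with (a, b) representing a + ib). Then for all v₁, v₂, w₁, w₂ ∈ V: ω_ℂ((v₁ + v₂, J*v₁ + Jv₂), (w₁ + w₂, J*w₁ + Jw₂)) = ω_ℂ((v₁, J*v₁), (w₂, Jw₂)) − ω_ℂ((w₁, J*w₁), (v₂, Jv₂)). -/
import Mathlib


open Complex

/-- An alternating ℝ-bilinear map ω : V × V → ℂ is of type (1,1) if it lies in the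
ℂ-linear span of the maps (v,w) ↦ ξ(v)ζ(w) − ξ(w)ζ(v) with ξ J-linear and ζ J*-linear. -/
def IsType11 (V : Type*) [AddCommGroup V] [Module ℝ V] (J Jstar : V →ₗ[ℝ] V)
    (ω : V →ₗ[ℝ] V →ₗ[ℝ] ℂ) : Prop :=
  ω ∈ Submodule.span ℂ {η : V →ₗ[ℝ] V →ₗ[ℝ] ℂ | ∃ ξ ζ : V →ₗ[ℝ] ℂ,
    (∀ v, ξ (J v) = I * ξ v) ∧ (∀ v, ζ (Jstar v) = I * ζ v) ∧
    ∀ v w, η v w = ξ v * ζ w - ξ w * ζ v}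

/-- The complex-bilinear extension of ω to the complexification V × V
(with (a, b) representing a + ib). -/
noncomputable def omegaC {V : Type*} [AddCommGroup V] [Module ℝ V]
    (ω : V →ₗ[ℝ] V →ₗ[ℝ] ℂ) (x y : V × V) : ℂ :=
  ω x.1 y.1 - ω x.2 y.2 + I * (ω x.1 y.2 + ω x.2 y.1)

theorem type_one_one_pairing
    (V : Type*) [AddCommGroup V] [Module ℝ V] [FiniteDimensional ℝ V]
    (J Jstar : V →ₗ[ℝ] V)
    (hJ : J ∘ₗ J = -LinearMap.id) (hJstar : Jstar ∘ₗ Jstar = -LinearMap.id)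
    (ω : V →ₗ[ℝ] V →ₗ[ℝ] ℂ) (halt : ∀ v, ω v v = 0)
    (h11 : IsType11 V J Jstar ω) :
    ∀ v₁ v₂ w₁ w₂ : V,
      omegaC ω (v₁ + v₂, Jstar v₁ + J v₂) (w₁ + w₂, Jstar w₁ + J w₂)
        = omegaC ω (v₁, Jstar v₁) (w₂, J w₂) - omegaC ω (w₁, Jstar w₁) (v₂, J v₂) := by
  intro v₁ v₂ w₁ w₂
  clear halt
  induction h11 using Submodule.span_induction with
  | mem η hη =>
    obtain ⟨ξ, ζ, hξ, hζ, h⟩ := hη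
    simp only [omegaC, map_add, LinearMap.add_apply, h, hξ, hζ]
    ring_nf
    simp only [Complex.I_sq]
    ring
  | zero => simp [omegaC]
  | add x y _ _ hx hy =>
    simp only [omegaC, LinearMap.add_apply] at *
    linear_combination hx + hy
  | smul c x _ hx =>
    simp only [omegaC, LinearMap.smul_apply, smul_eq_mul] at *
    linear_combination c * hx
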